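/- arXiv:0807.2500 — 2 statements merged into one kernel-verified Lean document; each statement's English description precedes it below -/
import Mathlib

section
/- For every integer s ≥ 2, the s-fold sumset of the set S = {0,2,8} equals {0,2,4,…,8s} \ {8s−10, 8s−4, 8s−2} (all even numbers from 0 to 8s except 8s−10, 8s−4, 8s−2), and in particular this s-fold sumset has exactly 4s−2 elements. -/
open Pointwise

/-- The s-fold sumset of a finite set of integers. -/
def foldSumset (S : Finset ℤ) : ℕ → Finset ℤ
  | 0 => {0}
  | n + 1 => S + foldSumset S n

def Tset (s : ℕ) : Finset ℤ :=
  ((Finset.range (4 * s + 1)).image (fun i : ℕ => (2 * i : ℤ))) \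
    {8 * (s : ℤ) - 10, 8 * (s : ℤ) - 4, 8 * (s : ℤ) - 2}

lemma base2 : foldSumset {0, 2, 8} 2 = Tset 2 := by decide

lemma step (s : ℕ) (hs : 2 ≤ s) : ({0, 2, 8} : Finset ℤ) + Tset s = Tset (s + 1) := by
  ext x
  simp only [Tset, Finset.mem_add, Finset.mem_sdiff, Finset.mem_image, Finset.mem_range,
    Finset.mem_insert, Finset.mem_singleton, not_or]
  constructor
  · rintro ⟨a, ha, y, ⟨⟨⟨j, hj, rfl⟩, hb1, hb2, hb3⟩, rfl⟩⟩
    rcases ha with rfl | rfl | rfl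
    · exact ⟨⟨j, by omega, by push_cast; ring⟩, by omega, by omega, by omega⟩
    · exact ⟨⟨j + 1, by omega, by push_cast; ring⟩, by omega, by omega, by omega⟩
    · exact ⟨⟨j + 4, by omega, by push_cast; ring⟩, by omega, by omega, by omega⟩
  · rintro ⟨⟨i, hi, rfl⟩, hb1, hb2, hb3⟩
    by_cases h1 : i = 4 * s - 5
    · exact ⟨2, by simp, 2 * ((4 * s - 6 : ℕ) : ℤ),
        ⟨⟨⟨4 * s - 6, by omega, rfl⟩, by omega, by omega, by omega⟩, by omega⟩⟩
    by_cases h2 : i = 4 * s - 2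
    · exact ⟨2, by simp, 2 * ((4 * s - 3 : ℕ) : ℤ),
        ⟨⟨⟨4 * s - 3, by omega, rfl⟩, by omega, by omega, by omega⟩, by omega⟩⟩
    by_cases h3 : i = 4 * s + 1
    · exact ⟨2, by simp, 2 * ((4 * s : ℕ) : ℤ),
        ⟨⟨⟨4 * s, by omega, rfl⟩, by omega, by omega, by omega⟩, by omega⟩⟩
    by_cases h4 : i = 4 * s + 4
    · exact ⟨8, by simp, 2 * ((4 * s : ℕ) : ℤ),
        ⟨⟨⟨4 * s, by omega, rfl⟩, by omega, by omega, by omega⟩, by omega⟩⟩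
    · exact ⟨0, by simp, 2 * (i : ℤ),
        ⟨⟨⟨i, by omega, rfl⟩, by omega, by omega, by omega⟩, by omega⟩⟩

lemma main_eq (s : ℕ) (hs : 2 ≤ s) : foldSumset {0, 2, 8} s = Tset s := by
  induction s, hs using Nat.le_induction with
  | base => exact base2
  | succ n hn ih =>
    show ({0, 2, 8} : Finset ℤ) + foldSumset {0, 2, 8} n = Tset (n + 1)
    rw [ih, step n hn]

lemma card_T (s : ℕ) (hs : 2 ≤ s) : (Tset s).card = 4 * s - 2 := by
  have hsub : ({8 * (s : ℤ) - 10, 8 * (s : ℤ) - 4, 8 * (s : ℤ) - 2} : Finset ℤ) ⊆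
      (Finset.range (4 * s + 1)).image (fun i : ℕ => (2 * i : ℤ)) := by
    intro x hx
    simp only [Finset.mem_insert, Finset.mem_singleton] at hx
    simp only [Finset.mem_image, Finset.mem_range]
    rcases hx with rfl | rfl | rfl
    · exact ⟨4 * s - 5, by omega, by omega⟩
    · exact ⟨4 * s - 2, by omega, by omega⟩
    · exact ⟨4 * s - 1, by omega, by omega⟩
  rw [Tset, Finset.card_sdiff_of_subset hsub, Finset.card_image_of_injective _ (fun a b h => by omega),
    Finset.card_range]
  have h3 : ({8 * (s : ℤ) - 10, 8 * (s : ℤ) - 4, 8 * (s : ℤ) - 2} : Finset ℤ).card = 3 := by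
    rw [Finset.card_insert_of_notMem (by simp only [Finset.mem_insert, Finset.mem_singleton]; omega),
      Finset.card_insert_of_notMem (by simp only [Finset.mem_singleton]; omega), Finset.card_singleton]
  rw [h3]; omega

/-- For s ≥ 2, the s-fold sumset of {0,2,8} is the set of even numbers from 0 to 8s
    except 8s−10, 8s−4, 8s−2; in particular it has 4s−2 elements. -/
theorem foldSumset_028 (s : ℕ) (hs : 2 ≤ s) :
    foldSumset {0, 2, 8} s =
      ((Finset.range (4 * s + 1)).image (fun i : ℕ => (2 * i : ℤ))) \
        {8 * (s : ℤ) - 10, 8 * (s : ℤ) - 4, 8 * (s : ℤ) - 2} ∧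
    (foldSumset {0, 2, 8} s).card = 4 * s - 2 := by
  refine ⟨main_eq s hs, ?_⟩
  rw [main_eq s hs, card_T s hs]
end

section
/- If a Steiner triple system of order v contains a Steiner triple system of order w as a subsystem with w < v, then v ≥ 2w + 1. -/
/-- If an STS(v) contains a proper subsystem STS(w) (w < v), then v ≥ 2w + 1. -/
theorem doyen_wilson_necessity {α : Type*} [DecidableEq α]
    (v w : ℕ) (X Y : Finset α) (A : Finset (Finset α))
    (hX : X.card = v) (hblocks : ∀ B ∈ A, B ⊆ X ∧ B.card = 3)
    (hpair : ∀ x ∈ X, ∀ y ∈ X, x ≠ y → ∃! B, B ∈ A ∧ x ∈ B ∧ y ∈ B)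
    (hYX : Y ⊆ X) (hY : Y.card = w)
    (hsub : ∀ x ∈ Y, ∀ y ∈ Y, x ≠ y → ∃ B ∈ A, x ∈ B ∧ y ∈ B ∧ B ⊆ Y)
    (hwv : w < v) :
    v ≥ 2 * w + 1 := by
  classical
  -- pick a point x outside Y
  have hss : Y ⊂ X := by
    refine ⟨hYX, fun h => ?_⟩
    have := Finset.card_le_card h
    omega
  obtain ⟨x, hxX, hxY⟩ := Finset.exists_of_ssubset hss
  -- key: for each y ∈ Y, there is a third point z of the block through x,y,
  -- lying outside insert x Y, together with its block
  have key : ∀ y ∈ Y, ∃ z ∈ X \ insert x Y, ∃ B ∈ A, x ∈ B ∧ y ∈ B ∧ z ∈ B := by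
    intro y hy
    have hyX : y ∈ X := hYX hy
    have hxy : x ≠ y := fun h => hxY (h ▸ hy)
    obtain ⟨B, ⟨hBA, hxB, hyB⟩, huniq⟩ := hpair x hxX y hyX hxy
    obtain ⟨hBX, hB3⟩ := hblocks B hBA
    have hsubxy : ({x, y} : Finset α) ⊆ B := by
      intro a ha; simp at ha; rcases ha with h | h <;> simp [h, hxB, hyB]
    have hcard2 : ({x, y} : Finset α).card = 2 := by
      rw [Finset.card_insert_of_notMem (by simpa using hxy), Finset.card_singleton]
    have hne : (B \ {x, y}).Nonempty := by
      rw [← Finset.card_pos, Finset.card_sdiff_of_subset hsubxy, hB3, hcard2]; norm_num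
    obtain ⟨z, hz⟩ := hne
    rw [Finset.mem_sdiff] at hz
    obtain ⟨hzB, hzxy⟩ := hz
    simp only [Finset.mem_insert, Finset.mem_singleton, not_or] at hzxy
    obtain ⟨hzx, hzy⟩ := hzxy
    refine ⟨z, ?_, B, hBA, hxB, hyB, hzB⟩
    rw [Finset.mem_sdiff, Finset.mem_insert]
    refine ⟨hBX hzB, ?_⟩
    rintro (h | hzY)
    · exact hzx h
    · -- z ∈ Y: block through y,z lies in Y, but uniqueness forces it to be B ∋ x
      obtain ⟨B', hB'A, hyB', hzB', hB'Y⟩ := hsub y hy z hzY (Ne.symm hzy)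
      obtain ⟨C, _, hCuniq⟩ := hpair y hyX z (hBX hzB) (Ne.symm hzy)
      have h1 : B' = C := hCuniq B' ⟨hB'A, hyB', hzB'⟩
      have h2 : B = C := hCuniq B ⟨hBA, hyB, hzB⟩
      exact hxY (hB'Y (by rw [h1, ← h2]; exact hxB))
  -- choice function
  set f : α → α := fun y => if h : y ∈ Y then (key y h).choose else y with hf
  have hmaps : ∀ y ∈ Y, f y ∈ X \ insert x Y := by
    intro y hy
    simp only [hf, dif_pos hy]
    exact (key y hy).choose_spec.1
  have hinj : Set.InjOn f Y := by
    intro y hy y' hy' heq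
    replace hy : y ∈ Y := hy
    replace hy' : y' ∈ Y := hy'
    simp only [hf, dif_pos hy, dif_pos hy'] at heq
    obtain ⟨hz1, B, hBA, hxB, hyB, hzB⟩ := (key y hy).choose_spec
    obtain ⟨hz1', B', hB'A, hxB', hy'B', hzB'⟩ := (key y' hy').choose_spec
    set z := (key y hy).choose
    rw [Finset.mem_sdiff, Finset.mem_insert] at hz1
    push_neg at hz1
    have hxz : x ≠ z := fun h => hz1.2.1 h.symm
    -- blocks through x and z coincide
    obtain ⟨C, _, hCuniq⟩ := hpair x hxX z hz1.1 hxz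
    have h1 : B = C := hCuniq B ⟨hBA, hxB, hzB⟩
    have h2 : B' = C := hCuniq B' ⟨hB'A, hxB', heq ▸ hzB'⟩
    have hBB' : B = B' := h1.trans h2.symm
    by_contra hne
    -- {x, y, y', z} ⊆ B has card 4 > 3
    have hy'B : y' ∈ B := hBB' ▸ hy'B'
    have hsub4 : ({x, y, y', z} : Finset α) ⊆ B := by
      intro a ha
      simp only [Finset.mem_insert, Finset.mem_singleton] at ha
      rcases ha with h | h | h | h
      · exact h ▸ hxB
      · exact h ▸ hyB
      · exact h ▸ hy'B
      · exact h ▸ hzB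
    have hcard4 : ({x, y, y', z} : Finset α).card = 4 := by
      have hzY : z ∉ Y := fun h => hz1.2.2 h
      have hxy : x ≠ y := fun h => hxY (h ▸ hy)
      have hxy' : x ≠ y' := fun h => hxY (h ▸ hy')
      have hyz : y ≠ z := fun h => hzY (h ▸ hy)
      have hy'z : y' ≠ z := fun h => hzY (h ▸ hy')
      rw [Finset.card_insert_of_notMem (by simp [hxy, hxy', hxz]),
          Finset.card_insert_of_notMem (by simp [hne, hyz]),
          Finset.card_insert_of_notMem (by simp [hy'z]),
          Finset.card_singleton]
    have := Finset.card_le_card hsub4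
    rw [hcard4, (hblocks B hBA).2] at this
    omega
  have hle : Y.card ≤ (X \ insert x Y).card :=
    Finset.card_le_card_of_injOn f hmaps hinj
  have hsubins : insert x Y ⊆ X := Finset.insert_subset hxX hYX
  have hcardins : (insert x Y).card = w + 1 := by
    rw [Finset.card_insert_of_notMem hxY, hY]
  rw [Finset.card_sdiff_of_subset hsubins, hX, hY, hcardins] at hle
  omega
end
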